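/- Let Γ : [0,1] → ℝ be strictly decreasing with Γ(d) > 0, and let c > 0, t > 0, 0 < d < 1, 0 < w < 1 with w > c/((1-d)Γ(d)). If p = Γ(d)(1 - τ/t) + (c/(1-d))(τ/t) for some τ ∈ (0, t·(Γ(d)-c)/(Γ(d) - c/(1-d))) (assuming Γ(d) > c/(1-d)), then both cooperation conditions hold: w > (1-τ/t)/((1-d)p/c - τ/t) and w > 1 - (1 - p/Γ(d))/(τ/t). -/

import Mathlib

theorem necessary_condition_is_sufficient
    (Γ : ℝ → ℝ) (c t d w τ p : ℝ)
    (hΓanti : StrictAntiOn Γ (Set.Icc 0 1))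
    (hΓpos : ∀ x ∈ Set.Icc (0:ℝ) 1, 0 < Γ x)
    (hc : 0 < c) (ht : 0 < t) (hd0 : 0 < d) (hd1 : d < 1)
    (hw0 : 0 < w) (hw1 : w < 1)
    (hwnec : w > c / ((1 - d) * Γ d))
    (hΓbig : Γ d > c / (1 - d))
    (hτ0 : 0 < τ) (hτub : τ < t * (Γ d - c) / (Γ d - c / (1 - d)))
    (hpeq : p = Γ d * (1 - τ / t) + (c / (1 - d)) * (τ / t)) :
    w > (1 - τ / t) / ((1 - d) * p / c - τ / t) ∧
      w > 1 - (1 - p / Γ d) / (τ / t) := by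
  have hG : 0 < Γ d := hΓpos d ⟨hd0.le, hd1.le⟩
  have h1d : 0 < 1 - d := by linarith
  have hGne : Γ d ≠ 0 := ne_of_gt hG
  have hcne : c ≠ 0 := ne_of_gt hc
  have h1dne : (1 - d) ≠ 0 := ne_of_gt h1d
  have hs0 : 0 < τ / t := div_pos hτ0 ht
  have hsne : τ / t ≠ 0 := ne_of_gt hs0
  constructor
  · rcases eq_or_ne (τ / t) 1 with hs | hs
    · have hp : p = c / (1 - d) := by rw [hpeq, hs]; ring
      have hden : (1 - d) * p / c - τ / t = 0 := by
        rw [hp, hs]; field_simp; ring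
      rw [hden]
      simpa using hw0
    · have hne : (1 : ℝ) - τ / t ≠ 0 := by
        intro h; apply hs; linarith [h]
      have hden : (1 - d) * p / c - τ / t = ((1 - d) * Γ d / c) * (1 - τ / t) := by
        rw [hpeq]; field_simp; ring
      rw [hden, mul_comm, div_mul_eq_div_div, div_self hne, one_div_div]
      exact hwnec
  · have hnum : 1 - p / Γ d = (τ / t) * (1 - c / ((1 - d) * Γ d)) := by
      rw [hpeq]; field_simp; ring
    have hkey : 1 - (1 - p / Γ d) / (τ / t) = c / ((1 - d) * Γ d) := by
      rw [hnum, mul_comm, mul_div_assoc, div_self hsne, mul_one]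
      ring
    rw [hkey]; exact hwnec
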